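/- Let s > 0 and let f ∈ L¹(ℝ^d) be such that its Fourier transform satisfies |f̂(ξ)| ≤ C^{n+1} n!^s ⟨ξ⟩^{-n} for some C > 0, all ξ ∈ ℝ^d and all n ∈ ℕ. Then there exists C₁ > 0, depending only on C, d and s, such that for every integer N ≥ 1, every integer n with 0 ≤ n ≤ N, and every ξ ∈ ℝ^d, |F(f · E_N)(ξ)| ≤ C₁^{n+1} n!^s ⟨ξ⟩^{-n}. -/

import Mathlib

open MeasureTheory Real

/-- The Gaussian window `E_N(x) = e^{-|x|²/(4N)}`. -/
noncomputable def EGaussR (d N : ℕ) (x : EuclideanSpace ℝ (Fin d)) : ℝ :=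
  Real.exp (-(‖x‖ ^ 2) / (4 * N))

/-- The Fourier transform `ĝ(ξ) = ∫ g(x) e^{-i⟨x,ξ⟩} dx`. -/
noncomputable def FT (d : ℕ) (g : EuclideanSpace ℝ (Fin d) → ℂ)
    (ξ : EuclideanSpace ℝ (Fin d)) : ℂ :=
  ∫ x : EuclideanSpace ℝ (Fin d), g x * Complex.exp (-Complex.I * ((inner ℝ x ξ : ℝ) : ℂ))

open Complex
open scoped RealInnerProductSpace

lemma core_exp {t u NR P Q : ℝ} (ht : 0 ≤ t) (hu : 0 ≤ u) (htN : t ≤ NR / 2)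
    (hP : 0 < P) (hQ : 0 < Q) (hPeetre : P ≤ 2 * Q * (1 + u)) :
    rexp (-NR * u) * Q ^ (-t) ≤ 2 ^ t * P ^ (-t) * rexp (-(NR / 2) * u) := by
  have hQt : (0:ℝ) < Q ^ t := Real.rpow_pos_of_pos hQ t
  have hPt : (0:ℝ) < P ^ t := Real.rpow_pos_of_pos hP t
  have hR : (0:ℝ) < 1 + u := by linarith
  have target' : rexp (-NR * u) * P ^ t ≤ (2 ^ t * rexp (-(NR / 2) * u)) * Q ^ t := by
    have h1 : P ^ t ≤ 2 ^ t * Q ^ t * (1 + u) ^ t := by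
      calc P ^ t ≤ (2 * Q * (1 + u)) ^ t := Real.rpow_le_rpow hP.le hPeetre ht
        _ = 2 ^ t * Q ^ t * (1 + u) ^ t := by
            rw [Real.mul_rpow (by positivity) hR.le, Real.mul_rpow (by positivity) hQ.le]
    have h2 : (1 + u) ^ t ≤ rexp (u * t) := by
      have hle : 1 + u ≤ rexp u := by have := Real.add_one_le_exp u; linarith
      calc (1 + u) ^ t ≤ (rexp u) ^ t := Real.rpow_le_rpow hR.le hle ht
        _ = rexp (u * t) := by
            rw [Real.rpow_def_of_pos (Real.exp_pos u), Real.log_exp]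
    have h3 : rexp (u * t) ≤ rexp (u * (NR / 2)) :=
      Real.exp_le_exp.mpr (mul_le_mul_of_nonneg_left htN hu)
    have h4 : P ^ t ≤ 2 ^ t * Q ^ t * rexp (u * (NR / 2)) := by
      calc P ^ t ≤ 2 ^ t * Q ^ t * (1 + u) ^ t := h1
        _ ≤ 2 ^ t * Q ^ t * rexp (u * (NR / 2)) := by
            exact mul_le_mul_of_nonneg_left (h2.trans h3)
              (mul_nonneg (Real.rpow_nonneg (by norm_num) t) hQt.le)
    have hexp : rexp (-NR * u) * rexp (u * (NR / 2)) = rexp (-(NR / 2) * u) := by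
      rw [← Real.exp_add]; congr 1; ring
    calc rexp (-NR * u) * P ^ t ≤ rexp (-NR * u) * (2 ^ t * Q ^ t * rexp (u * (NR / 2))) :=
          mul_le_mul_of_nonneg_left h4 (Real.exp_nonneg _)
      _ = (2 ^ t * rexp (-(NR / 2) * u)) * Q ^ t := by rw [← hexp]; ring
  rw [Real.rpow_neg hQ.le, Real.rpow_neg hP.le]
  calc rexp (-NR * u) * (Q ^ t)⁻¹ = rexp (-NR * u) / Q ^ t := by rw [div_eq_mul_inv]
    _ ≤ (2 ^ t * rexp (-(NR / 2) * u)) / P ^ t := (div_le_div_iff₀ hQt hPt).mpr target'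
    _ = 2 ^ t * (P ^ t)⁻¹ * rexp (-(NR / 2) * u) := by rw [div_eq_mul_inv]; ring

lemma integrable_gaussR (d : ℕ) {b : ℝ} (hb : 0 < b) :
    Integrable (fun v : EuclideanSpace ℝ (Fin d) => rexp (-b * ‖v‖^2)) := by
  have h := (GaussianFourier.integrable_cexp_neg_mul_sq_norm_add (b := (b:ℂ)) (by simpa)
    0 (0 : EuclideanSpace ℝ (Fin d))).norm
  simpa [Complex.norm_exp, ← Complex.ofReal_pow, ← Complex.ofReal_mul,
    ← Complex.ofReal_neg] using h

lemma gauss_repr (d N : ℕ) (hN : 0 < N) (x : EuclideanSpace ℝ (Fin d)) :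
    ((EGaussR d N x : ℝ) : ℂ) = (((N / π : ℝ) ^ ((d : ℝ) / 2) : ℝ) : ℂ) *
      ∫ v : EuclideanSpace ℝ (Fin d),
        Complex.exp (-(N : ℂ) * ‖v‖ ^ 2 + Complex.I * (⟪x, v⟫ : ℂ)) := by
  have hNR : (0:ℝ) < N := by exact_mod_cast hN
  have hNC : (0:ℝ) < ((N:ℂ)).re := by simpa
  have h := GaussianFourier.integral_cexp_neg_mul_sq_norm_add
    (V := EuclideanSpace ℝ (Fin d)) hNC Complex.I x
  rw [h]
  have hexp : Complex.exp (Complex.I ^ 2 * (‖x‖:ℂ) ^ 2 / (4 * (N:ℂ))) =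
      ((EGaussR d N x : ℝ) : ℂ) := by
    rw [Complex.I_sq, EGaussR, Complex.ofReal_exp]
    push_cast
    ring_nf
  have hfin : (Module.finrank ℝ (EuclideanSpace ℝ (Fin d)) : ℂ) = (d : ℂ) := by
    rw [finrank_euclideanSpace_fin]
  have hcpow : ((π:ℂ) / (N:ℂ)) ^ ((Module.finrank ℝ (EuclideanSpace ℝ (Fin d)) : ℂ) / 2) =
      (((π / N : ℝ) ^ ((d:ℝ)/2) : ℝ) : ℂ) := by
    rw [hfin, Complex.ofReal_cpow (by positivity)]
    push_cast
    ring_nf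
  rw [hcpow, hexp, ← mul_assoc, ← Complex.ofReal_mul, ← Real.mul_rpow (by positivity)
    (by positivity)]
  have : (N / π) * (π / N) = (1:ℝ) := by
    field_simp
  rw [this, Real.one_rpow]
  simp

lemma FT_mul_gauss (d N : ℕ) (hN : 0 < N) (f : EuclideanSpace ℝ (Fin d) → ℂ)
    (hf : Integrable f) (ξ : EuclideanSpace ℝ (Fin d)) :
    FT d (fun x => f x * (EGaussR d N x : ℂ)) ξ =
      (((N / π : ℝ) ^ ((d : ℝ) / 2) : ℝ) : ℂ) *
        ∫ η : EuclideanSpace ℝ (Fin d),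
          Complex.exp (-(N : ℂ) * ‖η‖ ^ 2) * FT d f (ξ - η) := by
  have hNR : (0:ℝ) < N := by exact_mod_cast hN
  have hNC : (0:ℝ) < ((N:ℂ)).re := by simpa
  set c : ℂ := (((N / π : ℝ) ^ ((d : ℝ) / 2) : ℝ) : ℂ) with hc
  set F : EuclideanSpace ℝ (Fin d) → EuclideanSpace ℝ (Fin d) → ℂ := fun x v =>
    (f x * Complex.exp (-Complex.I * (⟪x, ξ⟫ : ℂ))) *
      Complex.exp (-(N : ℂ) * ‖v‖ ^ 2 + Complex.I * (⟪x, v⟫ : ℂ)) with hF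
  have cont1 : Continuous fun p : EuclideanSpace ℝ (Fin d) × EuclideanSpace ℝ (Fin d) =>
      Complex.exp (-Complex.I * ((⟪p.1, ξ⟫ : ℝ) : ℂ)) :=
    Complex.continuous_exp.comp (continuous_const.mul
      (Complex.continuous_ofReal.comp (continuous_fst.inner continuous_const)))
  have cont2 : Continuous fun p : EuclideanSpace ℝ (Fin d) × EuclideanSpace ℝ (Fin d) =>
      Complex.exp (-(N : ℂ) * ‖p.2‖ ^ 2 + Complex.I * ((⟪p.1, p.2⟫ : ℝ) : ℂ)) := by
    apply Complex.continuous_exp.comp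
    apply Continuous.add
    · exact (continuous_const.mul ((Complex.continuous_ofReal.comp
        continuous_snd.norm).pow 2))
    · exact continuous_const.mul (Complex.continuous_ofReal.comp
        (continuous_fst.inner continuous_snd))
  have hFint : Integrable (Function.uncurry F) (volume.prod volume) := by
    have hbase : Integrable (fun p : EuclideanSpace ℝ (Fin d) × EuclideanSpace ℝ (Fin d) =>
        ‖f p.1‖ * rexp (-(N:ℝ) * ‖p.2‖^2)) (volume.prod volume) :=
      hf.norm.mul_prod (integrable_gaussR d hNR)
    have hmeas : AEStronglyMeasurable (Function.uncurry F) (volume.prod volume) := by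
      have h1 : AEStronglyMeasurable (fun p : EuclideanSpace ℝ (Fin d) × EuclideanSpace ℝ (Fin d) =>
          f p.1) (volume.prod volume) := hf.1.comp_fst
      exact (h1.mul cont1.aestronglyMeasurable).mul cont2.aestronglyMeasurable
    refine hbase.mono' hmeas ?_
    refine Filter.Eventually.of_forall fun p => ?_
    simp only [Function.uncurry, hF, norm_mul, Complex.norm_exp]
    have h1 : ((-Complex.I * ((⟪p.1, ξ⟫ : ℝ) : ℂ)).re) = 0 := by simp
    have h2 : ((-(N : ℂ) * (‖p.2‖:ℂ) ^ 2 + Complex.I * ((⟪p.1, p.2⟫ : ℝ) : ℂ)).re)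
        = -(N:ℝ) * ‖p.2‖^2 := by
      simp [Complex.add_re, Complex.mul_re, ← Complex.ofReal_pow]
    rw [h1, h2, Real.exp_zero, mul_one]
  calc FT d (fun x => f x * (EGaussR d N x : ℂ)) ξ
      = ∫ x : EuclideanSpace ℝ (Fin d), c * ∫ v : EuclideanSpace ℝ (Fin d), F x v := by
        unfold FT
        refine integral_congr_ae (Filter.Eventually.of_forall fun x => ?_)
        simp only
        rw [gauss_repr d N hN x, integral_const_mul]
        ring
    _ = c * ∫ x : EuclideanSpace ℝ (Fin d), ∫ v : EuclideanSpace ℝ (Fin d), F x v := by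
        rw [integral_const_mul]
    _ = c * ∫ v : EuclideanSpace ℝ (Fin d), ∫ x : EuclideanSpace ℝ (Fin d), F x v := by
        rw [integral_integral_swap hFint]
    _ = c * ∫ η : EuclideanSpace ℝ (Fin d), Complex.exp (-(N : ℂ) * ‖η‖ ^ 2) * FT d f (ξ - η) := by
        refine congrArg (fun z => c * z) ?_
        refine integral_congr_ae (Filter.Eventually.of_forall fun v => ?_)
        unfold FT
        simp only
        rw [← integral_const_mul]
        refine integral_congr_ae (Filter.Eventually.of_forall fun x => ?_)
        have harg : (-Complex.I * (⟪x, ξ⟫ : ℂ)) + (-(N : ℂ) * ‖v‖ ^ 2 + Complex.I * (⟪x, v⟫ : ℂ))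
            = (-(N : ℂ) * ‖v‖ ^ 2) + (-Complex.I * ((⟪x, ξ - v⟫ : ℝ) : ℂ)) := by
          rw [inner_sub_right]
          push_cast
          ring
        calc F x v = f x * Complex.exp ((-Complex.I * (⟪x, ξ⟫ : ℂ)) +
              (-(N : ℂ) * ‖v‖ ^ 2 + Complex.I * (⟪x, v⟫ : ℂ))) := by
              rw [Complex.exp_add]; ring
          _ = Complex.exp (-(N : ℂ) * ‖v‖ ^ 2) *
              (f x * Complex.exp (-Complex.I * ((⟪x, ξ - v⟫ : ℝ) : ℂ))) := by
              rw [harg, Complex.exp_add]; ring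


theorem gaussian_window_preserves_decay (d : ℕ) (s C : ℝ) (hs : 0 < s) (hC : 0 < C)
    (f : EuclideanSpace ℝ (Fin d) → ℂ) (hf : Integrable f)
    (hdecay : ∀ (n : ℕ) (ξ : EuclideanSpace ℝ (Fin d)),
      ‖FT d f ξ‖ ≤ C ^ (n + 1) * ((n.factorial : ℕ) : ℝ) ^ s * (1 + ‖ξ‖ ^ 2) ^ (-(n : ℝ) / 2)) :
    ∃ C₁ : ℝ, 0 < C₁ ∧
      ∀ N : ℕ, 1 ≤ N → ∀ n : ℕ, n ≤ N → ∀ ξ : EuclideanSpace ℝ (Fin d),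
        ‖FT d (fun x => f x * (EGaussR d N x : ℂ)) ξ‖ ≤
          C₁ ^ (n + 1) * ((n.factorial : ℕ) : ℝ) ^ s * (1 + ‖ξ‖ ^ 2) ^ (-(n : ℝ) / 2) := by
  refine ⟨2 ^ (d + 1) * C, by positivity, ?_⟩
  intro N hN n hn ξ
  have hN0 : 0 < N := hN
  have hNR : (0:ℝ) < N := by exact_mod_cast hN
  set t : ℝ := (n : ℝ) / 2 with ht
  set td : ℝ := (d : ℝ) / 2 with htd
  have ht0 : 0 ≤ t := by positivity
  set P : ℝ := 1 + ‖ξ‖ ^ 2 with hPdef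
  have hP : 0 < P := by positivity
  set A : ℝ := C ^ (n + 1) * ((n.factorial : ℕ) : ℝ) ^ s with hA
  have hA0 : 0 ≤ A := by positivity
  have hexp_eq : -(n : ℝ) / 2 = -t := by rw [ht]; ring
  rw [hexp_eq]
  set K : ℝ := 2 ^ t * A * P ^ (-t) with hK
  have hK0 : 0 ≤ K := by
    refine mul_nonneg (mul_nonneg (Real.rpow_nonneg (by norm_num) t) hA0) ?_
    exact Real.rpow_nonneg hP.le _
  -- pointwise bound on the norm of the integrand
  have hpt : ∀ η : EuclideanSpace ℝ (Fin d),
      ‖Complex.exp (-(N : ℂ) * ‖η‖ ^ 2) * FT d f (ξ - η)‖ ≤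
        K * rexp (-((N : ℝ) / 2) * ‖η‖ ^ 2) := by
    intro η
    have hnormexp : ‖Complex.exp (-(N : ℂ) * (‖η‖ : ℂ) ^ 2)‖ = rexp (-(N : ℝ) * ‖η‖ ^ 2) := by
      simp only [Complex.norm_exp]
      congr 1
      have : (-(N : ℂ) * (‖η‖ : ℂ) ^ 2) = (((-(N : ℝ) * ‖η‖ ^ 2 : ℝ)) : ℂ) := by push_cast; ring
      rw [this, Complex.ofReal_re]
    have hQ : (0:ℝ) < 1 + ‖ξ - η‖ ^ 2 := by positivity
    have hdec := hdecay n (ξ - η)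
    rw [hexp_eq] at hdec
    have hPeetre : P ≤ 2 * (1 + ‖ξ - η‖ ^ 2) * (1 + ‖η‖ ^ 2) := by
      have h1 : ‖ξ‖ ≤ ‖ξ - η‖ + ‖η‖ := by
        have := norm_add_le (ξ - η) η
        simpa using this
      have h2 : (0:ℝ) ≤ ‖ξ - η‖ := norm_nonneg _
      have h3 : (0:ℝ) ≤ ‖η‖ := norm_nonneg _
      have h4 : (0:ℝ) ≤ ‖ξ‖ := norm_nonneg _
      rw [hPdef]
      nlinarith [sq_nonneg (‖ξ - η‖ - ‖η‖), sq_nonneg (‖ξ - η‖ * ‖η‖)]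
    have hcore := core_exp (t := t) (u := ‖η‖ ^ 2) (NR := (N : ℝ)) ht0 (by positivity)
      (by rw [ht]; have : (n:ℝ) ≤ (N:ℝ) := by exact_mod_cast hn
          linarith) hP hQ hPeetre
    calc ‖Complex.exp (-(N : ℂ) * (‖η‖ : ℂ) ^ 2) * FT d f (ξ - η)‖
        = rexp (-(N : ℝ) * ‖η‖ ^ 2) * ‖FT d f (ξ - η)‖ := by rw [norm_mul, hnormexp]
      _ ≤ rexp (-(N : ℝ) * ‖η‖ ^ 2) * (A * (1 + ‖ξ - η‖ ^ 2) ^ (-t)) := by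
          refine mul_le_mul_of_nonneg_left ?_ (Real.exp_nonneg _)
          calc ‖FT d f (ξ - η)‖ ≤ C ^ (n + 1) * ((n.factorial : ℕ) : ℝ) ^ s *
                (1 + ‖ξ - η‖ ^ 2) ^ (-t) := hdec
            _ = A * (1 + ‖ξ - η‖ ^ 2) ^ (-t) := by rw [hA]
      _ = A * (rexp (-(N : ℝ) * ‖η‖ ^ 2) * (1 + ‖ξ - η‖ ^ 2) ^ (-t)) := by ring
      _ ≤ A * (2 ^ t * P ^ (-t) * rexp (-((N : ℝ) / 2) * ‖η‖ ^ 2)) :=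
          mul_le_mul_of_nonneg_left hcore hA0
      _ = K * rexp (-((N : ℝ) / 2) * ‖η‖ ^ 2) := by rw [hK]; ring
  -- value of the Gaussian integral
  have hval : ∫ η : EuclideanSpace ℝ (Fin d), K * rexp (-((N : ℝ) / 2) * ‖η‖ ^ 2) =
      K * (π / ((N : ℝ) / 2)) ^ td := by
    rw [integral_const_mul, GaussianFourier.integral_rexp_neg_mul_sq_norm (by positivity)]
    congr 2
    rw [finrank_euclideanSpace_fin, htd]
  have hmono : (∫ η : EuclideanSpace ℝ (Fin d),
      ‖Complex.exp (-(N : ℂ) * ‖η‖ ^ 2) * FT d f (ξ - η)‖) ≤ K * (π / ((N : ℝ) / 2)) ^ td := by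
    rw [← hval]
    refine integral_mono_of_nonneg (Filter.Eventually.of_forall fun η => norm_nonneg _)
      ((integrable_gaussR d (by positivity)).const_mul K)
      (Filter.Eventually.of_forall hpt)
  -- final numeric estimate
  have hkey : (2:ℝ) ^ td * 2 ^ t * C ^ (n + 1) ≤ (2 ^ (d + 1) * C) ^ (n + 1) := by
    rw [mul_pow, ← pow_mul]
    refine mul_le_mul_of_nonneg_right ?_ (by positivity)
    rw [← Real.rpow_add (by norm_num : (0:ℝ) < 2),
      ← Real.rpow_natCast (2:ℝ) ((d + 1) * (n + 1))]
    refine Real.rpow_le_rpow_of_exponent_le one_le_two ?_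
    rw [ht, htd]
    push_cast
    nlinarith [Nat.cast_nonneg (α := ℝ) d, Nat.cast_nonneg (α := ℝ) n]
  rw [FT_mul_gauss d N hN0 f hf ξ]
  calc ‖(((((N : ℝ) / π) ^ td : ℝ)) : ℂ) * ∫ η : EuclideanSpace ℝ (Fin d),
        Complex.exp (-(N : ℂ) * ‖η‖ ^ 2) * FT d f (ξ - η)‖
      = ((N : ℝ) / π) ^ td * ‖∫ η : EuclideanSpace ℝ (Fin d),
          Complex.exp (-(N : ℂ) * ‖η‖ ^ 2) * FT d f (ξ - η)‖ := by
        rw [norm_mul, Complex.norm_real, Real.norm_eq_abs,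
          _root_.abs_of_nonneg (Real.rpow_nonneg (by positivity) td)]
      _ ≤ ((N : ℝ) / π) ^ td * (K * (π / ((N : ℝ) / 2)) ^ td) := by
        refine mul_le_mul_of_nonneg_left
          ((norm_integral_le_integral_norm _).trans hmono)
          (Real.rpow_nonneg (by positivity) td)
      _ = 2 ^ td * K := by
        have hmul : (((N : ℝ) / π) ^ td) * ((π / ((N : ℝ) / 2)) ^ td) = 2 ^ td := by
          rw [← Real.mul_rpow (by positivity) (by positivity)]
          congr 1
          field_simp
        rw [mul_comm K, ← mul_assoc, hmul]
      _ = ((2:ℝ) ^ td * 2 ^ t * C ^ (n + 1)) * (((n.factorial : ℕ) : ℝ) ^ s * P ^ (-t)) := by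
        rw [hK, hA]; ring
      _ ≤ ((2 ^ (d + 1) * C) ^ (n + 1)) * (((n.factorial : ℕ) : ℝ) ^ s * P ^ (-t)) := by
        refine mul_le_mul_of_nonneg_right hkey ?_
        exact mul_nonneg (Real.rpow_nonneg (Nat.cast_nonneg _) s) (Real.rpow_nonneg hP.le _)
      _ = (2 ^ (d + 1) * C) ^ (n + 1) * ((n.factorial : ℕ) : ℝ) ^ s * P ^ (-t) := by ring
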